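/- Define φ_n : ℝ → ℝ by φ_n(x) := ∫_0^{max(x,0)} ∫_0^y ρ_n(z) dz dy, where ρ_n : [0,∞) → ℝ is continuous, satisfies 0 ≤ ρ_n(x) ≤ (1/(n x)) · 1_{(0,1]}(x), and ∫_0^∞ ρ_n(x) dx = 1. Then for every real x: φ_n(x) ≥ 0, x·φ_n'(x) ≥ 0, x·φ_n''(x) ≥ 0 (where defined), and as n → ∞, φ_n(x) → max(x,0), x·φ_n'(x) → max(x,0), and x·φ_n''(x) → 0. -/

import Mathlib

open Filter MeasureTheory

lemma myInt {f : ℝ → ℝ} (hc : Continuous f)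
    (hs : ∀ x ∉ Set.Ioc (0:ℝ) 1, f x = 0) : Integrable f := by
  refine hc.integrable_of_hasCompactSupport (HasCompactSupport.intro (isCompact_Icc (a := (0:ℝ)) (b := 1)) ?_)
  intro x hx
  exact hs x fun h => hx ⟨h.1.le, h.2⟩

lemma myF0 {f : ℝ → ℝ} (hs : ∀ x ∉ Set.Ioc (0:ℝ) 1, f x = 0) {y : ℝ} (hy : y ≤ 0) :
    (∫ z in (0:ℝ)..y, f z) = 0 := by
  rw [intervalIntegral.integral_symm,
    intervalIntegral.integral_congr (g := fun _ => (0:ℝ))]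
  · simp
  · intro z hz
    rw [Set.uIcc_of_le hy] at hz
    exact hs z (by simp; intro h; linarith [hz.2])

lemma myF1 {f : ℝ → ℝ} (hc : Continuous f)
    (hs : ∀ x ∉ Set.Ioc (0:ℝ) 1, f x = 0)
    (hi : (∫ x in Set.Ioi (0:ℝ), f x) = 1) : (∫ z in (0:ℝ)..1, f z) = 1 := by
  have hInt := myInt hc hs
  have h1 : ∫ x in Set.Ioi (0:ℝ), f x
      = (∫ x in Set.Ioc (0:ℝ) 1, f x) + ∫ x in Set.Ioi (1:ℝ), f x := by
    rw [← Set.Ioc_union_Ioi_eq_Ioi (zero_le_one (α := ℝ)),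
      setIntegral_union (Set.Ioc_disjoint_Ioi le_rfl) measurableSet_Ioi
      hInt.integrableOn hInt.integrableOn]
  have h2 : ∫ x in Set.Ioi (1:ℝ), f x = 0 :=
    setIntegral_eq_zero_of_forall_eq_zero fun x hx =>
      hs x (by simp at hx ⊢; intro _; linarith)
  rw [intervalIntegral.integral_of_le zero_le_one]
  rw [hi, h2, add_zero] at h1
  exact h1.symm

lemma myfnn {f : ℝ → ℝ} (hs : ∀ x ∉ Set.Ioc (0:ℝ) 1, f x = 0)
    (hb : ∀ x ∈ Set.Ioc (0:ℝ) 1, 0 ≤ f x) : ∀ x, 0 ≤ f x := by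
  intro x
  by_cases hx : x ∈ Set.Ioc (0:ℝ) 1
  · exact hb x hx
  · rw [hs x hx]

lemma myFnn {f : ℝ → ℝ} (hs : ∀ x ∉ Set.Ioc (0:ℝ) 1, f x = 0)
    (hb : ∀ x ∈ Set.Ioc (0:ℝ) 1, 0 ≤ f x) : ∀ y, 0 ≤ ∫ z in (0:ℝ)..y, f z := by
  intro y
  rcases le_or_gt 0 y with hy | hy
  · exact intervalIntegral.integral_nonneg hy fun u _ => myfnn hs hb u
  · rw [myF0 hs hy.le]

lemma myFmono {f : ℝ → ℝ} (hc : Continuous f) (h0 : ∀ x, 0 ≤ f x) {a b : ℝ} (hab : a ≤ b) :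
    (∫ z in (0:ℝ)..a, f z) ≤ ∫ z in (0:ℝ)..b, f z := by
  have hadj := intervalIntegral.integral_add_adjacent_intervals
    (hc.intervalIntegrable (μ := volume) 0 a) (hc.intervalIntegrable (μ := volume) a b)
  have hnn := intervalIntegral.integral_nonneg (μ := volume) hab (fun u _ => h0 u)
  linarith

lemma myFone {f : ℝ → ℝ} (hc : Continuous f)
    (hs : ∀ x ∉ Set.Ioc (0:ℝ) 1, f x = 0)
    (hi : (∫ x in Set.Ioi (0:ℝ), f x) = 1) {y : ℝ} (hy : 1 ≤ y) :
    (∫ z in (0:ℝ)..y, f z) = 1 := by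
  have hadj := intervalIntegral.integral_add_adjacent_intervals
    (hc.intervalIntegrable (μ := volume) 0 1) (hc.intervalIntegrable (μ := volume) 1 y)
  have h0 : (∫ z in (1:ℝ)..y, f z) = 0 := by
    rw [intervalIntegral.integral_of_le hy]
    exact setIntegral_eq_zero_of_forall_eq_zero fun z hz =>
      hs z (by simp at hz ⊢; intro _; linarith [hz.1])
  rw [myF1 hc hs hi, h0] at hadj
  linarith

lemma myFle1 {f : ℝ → ℝ} (hc : Continuous f)
    (hs : ∀ x ∉ Set.Ioc (0:ℝ) 1, f x = 0)
    (hb : ∀ x ∈ Set.Ioc (0:ℝ) 1, 0 ≤ f x)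
    (hi : (∫ x in Set.Ioi (0:ℝ), f x) = 1) (y : ℝ) :
    (∫ z in (0:ℝ)..y, f z) ≤ 1 := by
  rcases le_or_gt y 1 with hy | hy
  · calc (∫ z in (0:ℝ)..y, f z) ≤ ∫ z in (0:ℝ)..1, f z :=
        myFmono hc (myfnn hs hb) hy
      _ = 1 := myF1 hc hs hi
  · exact le_of_eq (myFone hc hs hi hy.le)

lemma myFlower {f : ℝ → ℝ} {c : ℝ} (hc : Continuous f)
    (hs : ∀ x ∉ Set.Ioc (0:ℝ) 1, f x = 0)
    (hb : ∀ x ∈ Set.Ioc (0:ℝ) 1, f x ≤ c * x⁻¹)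
    (hi : (∫ x in Set.Ioi (0:ℝ), f x) = 1) {y : ℝ} (hy : y ∈ Set.Ioc (0:ℝ) 1) :
    1 - c * Real.log (1/y) ≤ ∫ z in (0:ℝ)..y, f z := by
  have h0y : (0:ℝ) < y := hy.1
  have hy1 : y ≤ 1 := hy.2
  have hadj := intervalIntegral.integral_add_adjacent_intervals
    (hc.intervalIntegrable (μ := volume) 0 y) (hc.intervalIntegrable (μ := volume) y 1)
  have hgint : IntervalIntegrable (fun z : ℝ => c * z⁻¹) volume y 1 := by
    apply ContinuousOn.intervalIntegrable
    apply continuousOn_const.mul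
    apply ContinuousOn.inv₀ continuousOn_id
    intro z hz
    rw [Set.uIcc_of_le hy1] at hz
    exact ne_of_gt (lt_of_lt_of_le h0y hz.1)
  have hmono : (∫ z in y..1, f z) ≤ ∫ z in y..1, c * z⁻¹ := by
    apply intervalIntegral.integral_mono_on hy1 (hc.intervalIntegrable (μ := volume) y 1) hgint
    intro z hz
    exact hb z ⟨lt_of_lt_of_le h0y hz.1, hz.2⟩
  have hval : (∫ z in y..1, c * z⁻¹) = c * Real.log (1/y) := by
    rw [intervalIntegral.integral_const_mul, integral_inv]
    intro h
    rw [Set.uIcc_of_le hy1] at h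
    linarith [h.1]
  rw [myF1 hc hs hi] at hadj
  rw [hval] at hmono
  linarith

theorem stmt2 (ρ : ℕ → ℝ → ℝ) (φ : ℕ → ℝ → ℝ)
    (hcont : ∀ n, 1 ≤ n → Continuous (ρ n))
    (hsupp : ∀ n, 1 ≤ n → ∀ x : ℝ, x ∉ Set.Ioc (0:ℝ) 1 → ρ n x = 0)
    (hbound : ∀ n, 1 ≤ n → ∀ x ∈ Set.Ioc (0:ℝ) 1,
      0 ≤ ρ n x ∧ ρ n x ≤ 1 / ((n : ℝ) * x))
    (hint : ∀ n, 1 ≤ n → (∫ x in Set.Ioi (0:ℝ), ρ n x) = 1)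
    (hφ : ∀ n x, φ n x = ∫ y in (0:ℝ)..(max x 0), ∫ z in (0:ℝ)..y, ρ n z) :
    (∀ n, 1 ≤ n → ∀ x : ℝ,
      0 ≤ φ n x ∧ 0 ≤ x * deriv (φ n) x ∧ 0 ≤ x * deriv (deriv (φ n)) x) ∧
    (∀ x : ℝ,
      Tendsto (fun n => φ n x) atTop (nhds (max x 0)) ∧
      Tendsto (fun n => x * deriv (φ n) x) atTop (nhds (max x 0)) ∧
      Tendsto (fun n => x * deriv (deriv (φ n)) x) atTop (nhds 0)) := by
  have hρnn : ∀ n, 1 ≤ n → ∀ x, 0 ≤ ρ n x := fun n hn =>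
    myfnn (hsupp n hn) (fun x hx => (hbound n hn x hx).1)
  have hψcont : ∀ n, 1 ≤ n → Continuous (fun y : ℝ => ∫ z in (0:ℝ)..y, ρ n z) := fun n hn =>
    intervalIntegral.continuous_primitive
      (fun a b => (hcont n hn).intervalIntegrable (μ := volume) a b) 0
  have hψnn : ∀ n, 1 ≤ n → ∀ y, 0 ≤ ∫ z in (0:ℝ)..y, ρ n z := fun n hn =>
    myFnn (hsupp n hn) (fun z hz => (hbound n hn z hz).1)
  have hψle1 : ∀ n, 1 ≤ n → ∀ y, (∫ z in (0:ℝ)..y, ρ n z) ≤ 1 := fun n hn =>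
    myFle1 (hcont n hn) (hsupp n hn) (fun z hz => (hbound n hn z hz).1) (hint n hn)
  have hφψ : ∀ n, 1 ≤ n → φ n = fun x => ∫ y in (0:ℝ)..x, (∫ z in (0:ℝ)..y, ρ n z) := by
    intro n hn; funext x
    rw [hφ]
    rcases le_or_gt 0 x with hx | hx
    · rw [max_eq_left hx]
    · rw [max_eq_right hx.le, intervalIntegral.integral_same,
        intervalIntegral.integral_symm,
        intervalIntegral.integral_congr (g := fun _ => (0:ℝ))]
      · simp
      · intro y hy
        rw [Set.uIcc_of_le hx.le] at hy
        exact myF0 (hsupp n hn) hy.2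
  have hd1 : ∀ n, 1 ≤ n → ∀ x, deriv (φ n) x = ∫ z in (0:ℝ)..x, ρ n z := by
    intro n hn x
    rw [hφψ n hn]
    exact Continuous.deriv_integral _ (hψcont n hn) 0 x
  have hd2 : ∀ n, 1 ≤ n → ∀ x, deriv (deriv (φ n)) x = ρ n x := by
    intro n hn x
    have : deriv (φ n) = fun y : ℝ => ∫ z in (0:ℝ)..y, ρ n z := funext (hd1 n hn)
    rw [this]
    exact Continuous.deriv_integral _ (hcont n hn) 0 x
  have htend : ∀ y : ℝ, 0 < y →
      Tendsto (fun m : ℕ => ∫ z in (0:ℝ)..y, ρ (m+1) z) atTop (nhds 1) := by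
    intro y h0y
    rcases le_or_gt 1 y with h1y | h1y
    · exact tendsto_const_nhds.congr fun m =>
        (myFone (hcont _ (Nat.le_add_left 1 m)) (hsupp _ (Nat.le_add_left 1 m))
          (hint _ (Nat.le_add_left 1 m)) h1y).symm
    · apply tendsto_of_tendsto_of_tendsto_of_le_of_le
        (g := fun m : ℕ => 1 - (1/((m:ℝ)+1)) * Real.log (1/y)) (h := fun _ : ℕ => (1:ℝ))
      · have h := (tendsto_one_div_add_atTop_nhds_zero_nat.mul_const
          (Real.log (1/y))).const_sub 1
        simpa using h
      · exact tendsto_const_nhds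
      · intro m
        apply myFlower (hcont _ (Nat.le_add_left 1 m)) (hsupp _ (Nat.le_add_left 1 m))
          ?_ (hint _ (Nat.le_add_left 1 m)) ⟨h0y, h1y.le⟩
        intro z hz
        have h := (hbound _ (Nat.le_add_left 1 m) z hz).2
        calc ρ (m+1) z ≤ 1 / ((((m:ℕ)+1 : ℕ):ℝ) * z) := h
          _ = 1/((m:ℝ)+1) * z⁻¹ := by push_cast; rw [one_div, mul_inv, ← one_div]
      · intro m
        exact hψle1 _ (Nat.le_add_left 1 m) y
  constructor
  · intro n hn x
    refine ⟨?_, ?_, ?_⟩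
    · rw [hφ]
      exact intervalIntegral.integral_nonneg (le_max_right x 0) fun u _ => hψnn n hn u
    · rw [hd1 n hn x]
      rcases le_or_gt 0 x with hx | hx
      · exact mul_nonneg hx (hψnn n hn x)
      · rw [myF0 (hsupp n hn) hx.le, mul_zero]
    · rw [hd2 n hn x]
      rcases le_or_gt x 0 with hx | hx
      · rw [hsupp n hn x (by simp; intro h; linarith), mul_zero]
      · exact mul_nonneg hx.le (hρnn n hn x)
  · intro x
    refine ⟨?_, ?_, ?_⟩
    · rcases le_or_gt x 0 with hx | hx
      · rw [max_eq_right hx]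
        apply tendsto_const_nhds.congr fun n => ?_
        rw [hφ, max_eq_right hx, intervalIntegral.integral_same]
      · rw [max_eq_left hx.le, ← tendsto_add_atTop_iff_nat 1]
        have hrw : ∀ m : ℕ, φ (m+1) x
            = ∫ y in Set.Ioc (0:ℝ) x, (∫ z in (0:ℝ)..y, ρ (m+1) z) := fun m => by
          rw [hφ, max_eq_left hx.le, intervalIntegral.integral_of_le hx.le]
        have hDCT : Tendsto
            (fun m : ℕ => ∫ y in Set.Ioc (0:ℝ) x, (∫ z in (0:ℝ)..y, ρ (m+1) z)) atTop
            (nhds (∫ _ in Set.Ioc (0:ℝ) x, (1:ℝ))) := by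
          apply tendsto_integral_of_dominated_convergence (fun _ => (1:ℝ))
          · exact fun m => ((hψcont (m+1) (Nat.le_add_left 1 m)).aestronglyMeasurable)
          · exact integrableOn_const measure_Ioc_lt_top.ne
          · intro m
            apply Eventually.of_forall fun a => ?_
            rw [Real.norm_eq_abs, abs_le]
            exact ⟨by linarith [hψnn (m+1) (Nat.le_add_left 1 m) a],
              hψle1 (m+1) (Nat.le_add_left 1 m) a⟩
          · exact (ae_restrict_iff' measurableSet_Ioc).2
              (Eventually.of_forall fun a ha => htend a ha.1)
        have hval : (∫ _ in Set.Ioc (0:ℝ) x, (1:ℝ)) = x := by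
          simp [Real.volume_Ioc, ENNReal.toReal_ofReal hx.le, hx.le]
        have hfin := hDCT.congr fun m => (hrw m).symm
        rwa [hval] at hfin
    · rw [← tendsto_add_atTop_iff_nat 1]
      have hrw : ∀ m : ℕ, x * deriv (φ (m+1)) x = x * ∫ z in (0:ℝ)..x, ρ (m+1) z :=
        fun m => by rw [hd1 _ (Nat.le_add_left 1 m) x]
      rcases le_or_gt x 0 with hx | hx
      · rw [max_eq_right hx]
        apply tendsto_const_nhds.congr fun m => ?_
        rw [hrw m, myF0 (hsupp _ (Nat.le_add_left 1 m)) hx, mul_zero]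
      · rw [max_eq_left hx.le]
        have h := (htend x hx).const_mul x
        rw [mul_one] at h
        exact h.congr fun m => (hrw m).symm
    · rw [← tendsto_add_atTop_iff_nat 1]
      have hrw : ∀ m : ℕ, x * deriv (deriv (φ (m+1))) x = x * ρ (m+1) x :=
        fun m => by rw [hd2 _ (Nat.le_add_left 1 m) x]
      by_cases hx : x ∈ Set.Ioc (0:ℝ) 1
      · apply tendsto_of_tendsto_of_tendsto_of_le_of_le
          (g := fun _ : ℕ => (0:ℝ)) (h := fun m : ℕ => 1/((m:ℝ)+1))
          tendsto_const_nhds tendsto_one_div_add_atTop_nhds_zero_nat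
        · intro m
          show (0:ℝ) ≤ x * deriv (deriv (φ (m+1))) x
          rw [hrw m]
          exact mul_nonneg hx.1.le (hρnn _ (Nat.le_add_left 1 m) x)
        · intro m
          show x * deriv (deriv (φ (m+1))) x ≤ 1/((m:ℝ)+1)
          rw [hrw m]
          have hxne : x ≠ 0 := ne_of_gt hx.1
          calc x * ρ (m+1) x ≤ x * (1 / ((((m:ℕ)+1 : ℕ):ℝ) * x)) :=
              mul_le_mul_of_nonneg_left (hbound _ (Nat.le_add_left 1 m) x hx).2 hx.1.le
            _ = 1/((m:ℝ)+1) := by push_cast; field_simp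
      · apply tendsto_const_nhds.congr fun m => ?_
        rw [hrw m, hsupp _ (Nat.le_add_left 1 m) x hx, mul_zero]
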